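/- Let V be a complex Hilbert space, B a bounded, modulus-coercive sesquilinear form on V with bound C_B and coercivity constant α, π : V → V a continuous linear projection with range V_H and kernel W, K : V_H → W the ideal corrector, and F a continuous antilinear functional on V. Let u ∈ V solve B(u, v) = F(v) for all v ∈ V and let G(F) ∈ W be the Green's corrector. Let K_m : V_H → W be a continuous linear map with ‖K(v_H) − K_m(v_H)‖ ≤ ε‖v_H‖ for all v_H ∈ V_H, and let g_m ∈ V satisfy ‖g_m − G(F)‖ ≤ δ. Then there exists a unique u_{H,m}^corr ∈ V_H solving B((I + K_m)(u_{H,m}^corr), (I + K_m)(v)) = F((I + K_m)(v)) − B(g_m, (I + K_m)(v)) for all v ∈ V_H, and the corrected approximation u^ms := (I + K_m)(u_{H,m}^corr) + g_m satisfies ‖u − u^ms‖ ≤ (C_B/α)(ε‖π u‖ + δ). -/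

import Mathlib

open InnerProductSpace in
lemma aux_complex_laxmilgram {E : Type*} [NormedAddCommGroup E] [InnerProductSpace ℂ E]
    [CompleteSpace E]
    (B : E → E → ℂ) (C_B α : ℝ) (hC_B : 0 < C_B) (hα : 0 < α)
    (hadd₁ : ∀ u v w : E, B (u + v) w = B u w + B v w)
    (hsmul₁ : ∀ (c : ℂ) (u w : E), B (c • u) w = c * B u w)
    (hadd₂ : ∀ u v w : E, B u (v + w) = B u v + B u w)
    (hsmul₂ : ∀ (c : ℂ) (u w : E), B u (c • w) = (starRingEnd ℂ) c * B u w)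
    (hbound : ∀ u v : E, ‖B u v‖ ≤ C_B * ‖u‖ * ‖v‖)
    (hcoer : ∀ v : E, α * ‖v‖ ^ 2 ≤ ‖B v v‖)
    (L : E → ℂ)
    (hLadd : ∀ y y' : E, L (y + y') = L y + L y')
    (hLsmul : ∀ (c : ℂ) (y : E), L (c • y) = (starRingEnd ℂ) c * L y)
    (CL : ℝ) (hL : ∀ y : E, ‖L y‖ ≤ CL * ‖y‖) :
    ∃ z : E, ∀ y : E, B z y = L y := by
  classical
  -- the functional  y ↦ conj (B x y)  is a continuous linear functional
  set φ : E → (E →L[ℂ] ℂ) := fun x => LinearMap.mkContinuous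
    { toFun := fun y => (starRingEnd ℂ) (B x y)
      map_add' := fun y y' => by simp [hadd₂]
      map_smul' := fun c y => by simp [hsmul₂, map_mul] }
    (C_B * ‖x‖)
    (fun y => by simpa [mul_assoc] using hbound x y) with hφ
  have hφ_apply : ∀ x y : E, φ x y = (starRingEnd ℂ) (B x y) := fun x y => rfl
  set Af : E → E := fun x => (toDual ℂ E).symm (φ x) with hAf
  have hA : ∀ x y : E, ⟪y, Af x⟫_ℂ = B x y := by
    intro x y
    rw [← inner_conj_symm, hAf]
    simp only []
    rw [toDual_symm_apply, hφ_apply, RingHomCompTriple.comp_apply]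
    simp
  have hAadd : ∀ x x' : E, Af (x + x') = Af x + Af x' := by
    intro x x'
    refine ext_inner_left ℂ fun v => ?_
    rw [hA, inner_add_right, hA, hA, hadd₁]
  have hAsmul : ∀ (c : ℂ) (x : E), Af (c • x) = c • Af x := by
    intro c x
    refine ext_inner_left ℂ fun v => ?_
    rw [hA, inner_smul_right, hA, hsmul₁]
  have hAbound : ∀ x : E, ‖Af x‖ ≤ C_B * ‖x‖ := by
    intro x
    rcases eq_or_lt_of_le (norm_nonneg (Af x)) with h0 | h0
    · rw [← h0]; positivity
    · have h1 : ‖Af x‖ ^ 2 = ‖B x (Af x)‖ := by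
        rw [← hA x (Af x), inner_self_eq_norm_sq_to_K]
        simp [norm_pow]
      have h2 := hbound x (Af x)
      rw [← h1] at h2
      have h3 : ‖Af x‖ * ‖Af x‖ ≤ (C_B * ‖x‖) * ‖Af x‖ := by nlinarith
      exact le_of_mul_le_mul_right h3 h0
  set A : E →L[ℂ] E := LinearMap.mkContinuous
    { toFun := Af, map_add' := hAadd, map_smul' := fun c x => by simpa using hAsmul c x }
    C_B hAbound with hAdef
  have hA' : ∀ x y : E, ⟪y, A x⟫_ℂ = B x y := hA
  have below : ∀ x : E, α * ‖x‖ ≤ ‖A x‖ := by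
    intro x
    rcases eq_or_lt_of_le (norm_nonneg x) with h0 | h0
    · rw [← h0, mul_zero]; exact norm_nonneg _
    · have h1 : α * ‖x‖ ^ 2 ≤ ‖B x x‖ := hcoer x
      rw [← hA' x x] at h1
      have h2 : ‖⟪x, A x⟫_ℂ‖ ≤ ‖x‖ * ‖A x‖ := norm_inner_le_norm x (A x)
      nlinarith
  have antilip : AntilipschitzWith (α⁻¹).toNNReal A := by
    refine A.antilipschitz_of_bound fun x => ?_
    rw [Real.coe_toNNReal' , max_eq_left_of_lt (inv_pos.mpr hα)]
    rw [le_inv_mul_iff₀ hα]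
    exact below x
  have hclosed : IsClosed (LinearMap.range (A : E →ₗ[ℂ] E) : Set E) :=
    antilip.isClosed_range A.uniformContinuous
  haveI := hclosed.completeSpace_coe
  have hrange : LinearMap.range (A : E →ₗ[ℂ] E) = ⊤ := by
    rw [← (LinearMap.range (A : E →ₗ[ℂ] E)).orthogonal_orthogonal, Submodule.eq_top_iff']
    intro v
    rw [Submodule.mem_orthogonal]
    intro w hw
    have h1 : ⟪A w, w⟫_ℂ = 0 := hw (A w) (LinearMap.mem_range_self _ w)
    have h2 : B w w = 0 := by
      rw [← hA' w w, ← inner_conj_symm, h1, map_zero]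
    have h3 : α * ‖w‖ ^ 2 ≤ 0 := by simpa [h2] using hcoer w
    have h4 : w = 0 := by
      by_contra hne
      have hpos : 0 < ‖w‖ := norm_pos_iff.mpr hne
      have : 0 < α * ‖w‖ ^ 2 := by positivity
      linarith
    rw [h4, inner_zero_left]
  -- the right-hand side functional
  set ψ : E →L[ℂ] ℂ := LinearMap.mkContinuous
    { toFun := fun y => (starRingEnd ℂ) (L y)
      map_add' := fun y y' => by simp [hLadd]
      map_smul' := fun c y => by simp [hLsmul, map_mul] }
    CL (fun y => by simpa using hL y) with hψ
  set w0 : E := (toDual ℂ E).symm ψ with hw0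
  have hw0' : ∀ y : E, ⟪y, w0⟫_ℂ = L y := by
    intro y
    rw [← inner_conj_symm, hw0, toDual_symm_apply]
    simp [hψ]
  obtain ⟨z, hz⟩ : ∃ z : E, A z = w0 := by
    have : w0 ∈ LinearMap.range (A : E →ₗ[ℂ] E) := by rw [hrange]; trivial
    exact this
  exact ⟨z, fun y => by rw [← hA' z y, hz, hw0' y]⟩


/-- **Error estimate for the localized source-corrected method (abstract form
of Section 3.5).** Let `K` be the ideal corrector, `K_m` a continuous linear
map on `V` mapping `V_H = range π` into `W = ker π` with
`‖K v_H - K_m v_H‖ ≤ ε ‖v_H‖` on `V_H`, and let `g_m` approximate the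
Green's corrector `gF` of `F` with `‖g_m - gF‖ ≤ δ`. Then the localized
source-corrected homogenized equation has a unique solution
`u_{H,m}^corr ∈ V_H`, and the corrected approximation
`u^ms = (I + K_m) u_{H,m}^corr + g_m` satisfies
`‖u - u^ms‖ ≤ (C_B / α) (ε ‖π u‖ + δ)`. -/
theorem localized_source_corrected_method_error_estimate
    {V : Type*} [NormedAddCommGroup V] [InnerProductSpace ℂ V] [CompleteSpace V]
    (B : V → V → ℂ) (C_B α : ℝ) (hC_B : 0 < C_B) (hα : 0 < α)
    (hadd₁ : ∀ u v w : V, B (u + v) w = B u w + B v w)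
    (hsmul₁ : ∀ (c : ℂ) (u w : V), B (c • u) w = c * B u w)
    (hadd₂ : ∀ u v w : V, B u (v + w) = B u v + B u w)
    (hsmul₂ : ∀ (c : ℂ) (u w : V), B u (c • w) = (starRingEnd ℂ) c * B u w)
    (hbound : ∀ u v : V, ‖B u v‖ ≤ C_B * ‖u‖ * ‖v‖)
    (hcoer : ∀ v : V, α * ‖v‖ ^ 2 ≤ ‖B v v‖)
    (π : V →L[ℂ] V) (hπ : ∀ v : V, π (π v) = π v)
    (K : V → V)
    (hK₀ : ∀ vH ∈ Set.range π, π (K vH) = 0)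
    (hK : ∀ vH ∈ Set.range π, ∀ w : V, π w = 0 → B (K vH) w = -(B vH w))
    (F : V →L⋆[ℂ] ℂ)
    (u : V) (hu : ∀ v : V, B u v = F v)
    (gF : V) (hgF₀ : π gF = 0) (hgF : ∀ w : V, π w = 0 → B gF w = F w)
    (Km : V →L[ℂ] V) (hKm₀ : ∀ vH ∈ Set.range π, π (Km vH) = 0)
    (ε : ℝ) (hε : 0 ≤ ε)
    (happrox : ∀ vH ∈ Set.range π, ‖K vH - Km vH‖ ≤ ε * ‖vH‖)
    (gm : V) (δ : ℝ) (hδ : 0 ≤ δ) (hgm : ‖gm - gF‖ ≤ δ) :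
    (∃! uc : V, uc ∈ Set.range π ∧
        ∀ v ∈ Set.range π,
          B (uc + Km uc) (v + Km v) = F (v + Km v) - B gm (v + Km v)) ∧
      (∀ uc : V,
        (uc ∈ Set.range π ∧
          ∀ v ∈ Set.range π,
            B (uc + Km uc) (v + Km v) = F (v + Km v) - B gm (v + Km v)) →
        ‖u - ((uc + Km uc) + gm)‖ ≤ (C_B / α) * (ε * ‖π u‖ + δ)) := by
  classical
  have hmem : ∀ v : V, v ∈ Set.range π ↔ π v = v := by
    intro v
    constructor
    · rintro ⟨x, rfl⟩; exact hπ x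
    · intro h; exact ⟨v, h⟩
  -- basic algebraic consequences for B
  have hBsub₁ : ∀ x y w : V, B (x - y) w = B x w - B y w := by
    intro x y w
    have hneg : B (-y) w = -(B y w) := by
      have := hsmul₁ (-1) y w
      simpa using this
    rw [sub_eq_add_neg, hadd₁, hneg, sub_eq_add_neg]
  have hBsub₂ : ∀ x y w : V, B x (y - w) = B x y - B x w := by
    intro x y w
    have hneg : B x (-w) = -(B x w) := by
      have := hsmul₂ (-1) x w
      simpa using this
    rw [sub_eq_add_neg, hadd₂, hneg, sub_eq_add_neg]
  have hcoer0 : ∀ v : V, B v v = 0 → v = 0 := by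
    intro v hv
    by_contra hne
    have hpos : 0 < ‖v‖ := norm_pos_iff.mpr hne
    have h1 := hcoer v
    rw [hv, norm_zero] at h1
    have : 0 < α * ‖v‖ ^ 2 := by positivity
    linarith
  have hπu_mem : π u ∈ Set.range π := ⟨u, rfl⟩
  -- the exact decomposition u = π u + K (π u) + gF
  have hdecomp : u = π u + K (π u) + gF := by
    have hπe : π (u - (π u + K (π u) + gF)) = 0 := by
      simp only [map_sub, map_add, hπ u, hK₀ _ hπu_mem, hgF₀]
      abel
    have hBew : ∀ w : V, π w = 0 → B (u - (π u + K (π u) + gF)) w = 0 := by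
      intro w hw
      rw [hBsub₁, hadd₁, hadd₁, hu, hK _ hπu_mem w hw, hgF w hw]
      ring
    exact sub_eq_zero.mp (hcoer0 _ (hBew _ hπe))
  -- the trial space S = { v + Km v : v ∈ range π } is a closed submodule
  set Q : V →L[ℂ] V :=
    (ContinuousLinearMap.id ℂ V + Km).comp π - ContinuousLinearMap.id ℂ V with hQ
  set S : Submodule ℂ V := LinearMap.ker (Q : V →ₗ[ℂ] V) with hSdef
  have hQs : ∀ s : V, Q s = π s + Km (π s) - s := by
    intro s
    simp [hQ, ContinuousLinearMap.sub_apply, ContinuousLinearMap.comp_apply,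
      ContinuousLinearMap.add_apply]
  have hS : ∀ s : V, s ∈ S ↔ π s + Km (π s) = s := by
    intro s
    rw [hSdef, LinearMap.mem_ker, ContinuousLinearMap.coe_coe, hQs, sub_eq_zero]
  have hin : ∀ v ∈ Set.range π, v + Km v ∈ S := by
    intro v hv
    have hπv : π v = v := (hmem v).mp hv
    have h1 : π (v + Km v) = v := by rw [map_add, hπv, hKm₀ v hv, add_zero]
    rw [hS, h1]
  have hclosedS : IsClosed (S : Set V) := ContinuousLinearMap.isClosed_ker Q
  haveI : CompleteSpace S := hclosedS.completeSpace_coe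
  -- Lax-Milgram on S
  obtain ⟨z0, hz0⟩ :=
    aux_complex_laxmilgram (E := ↥S) (fun x y => B ↑x ↑y) C_B α hC_B hα
      (fun a b c => by
        simp only [Submodule.coe_add]; exact hadd₁ _ _ _)
      (fun c a b => by
        simp only [Submodule.coe_smul]; exact hsmul₁ _ _ _)
      (fun a b c => by
        simp only [Submodule.coe_add]; exact hadd₂ _ _ _)
      (fun c a b => by
        simp only [Submodule.coe_smul]; exact hsmul₂ _ _ _)
      (fun a b => hbound _ _) (fun a => hcoer _)
      (fun y => F ↑y - B gm ↑y)
      (fun y y' => by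
        simp only [Submodule.coe_add, map_add, hadd₂]; ring)
      (fun c y => by
        simp only [Submodule.coe_smul, ContinuousLinearMap.map_smulₛₗ, hsmul₂, smul_eq_mul]
        ring)
      (‖F‖ + C_B * ‖gm‖)
      (fun y => by
        calc ‖F ↑y - B gm ↑y‖ ≤ ‖F ↑y‖ + ‖B gm ↑y‖ := norm_sub_le _ _
          _ ≤ ‖F‖ * ‖(y : V)‖ + C_B * ‖gm‖ * ‖(y : V)‖ :=
              add_le_add (F.le_opNorm _) (by simpa [mul_assoc] using hbound gm ↑y)
          _ = (‖F‖ + C_B * ‖gm‖) * ‖(y : V)‖ := by ring)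
  have hz0S : π (↑z0 : V) + Km (π ↑z0) = ↑z0 := (hS ↑z0).mp z0.2
  set uc₀ : V := π (↑z0 : V) with huc₀
  have huc₀mem : uc₀ ∈ Set.range π := ⟨↑z0, rfl⟩
  have hz0eq : (↑z0 : V) = uc₀ + Km uc₀ := hz0S.symm
  -- uc₀ solves the localized corrected equation
  have hsolve : ∀ v ∈ Set.range π,
      B (uc₀ + Km uc₀) (v + Km v) = F (v + Km v) - B gm (v + Km v) := by
    intro v hv
    rw [← hz0eq]
    exact hz0 ⟨v + Km v, hin v hv⟩
  -- any solution equals uc₀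
  have huniq : ∀ uc : V,
      (uc ∈ Set.range π ∧
        ∀ v ∈ Set.range π,
          B (uc + Km uc) (v + Km v) = F (v + Km v) - B gm (v + Km v)) →
      uc = uc₀ := by
    rintro uc ⟨hucmem, heq⟩
    have hz'S : uc + Km uc ∈ S := hin uc hucmem
    have hall : ∀ y : ↥S, B (uc + Km uc) ↑y = F ↑y - B gm ↑y := by
      intro y
      have hrep : (↑y : V) = π ↑y + Km (π ↑y) := ((hS ↑y).mp y.2).symm
      rw [hrep]
      exact heq (π ↑y) ⟨↑y, rfl⟩
    have hdS : uc + Km uc - ↑z0 ∈ S := S.sub_mem hz'S z0.2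
    have hBdd : B (uc + Km uc - ↑z0) (uc + Km uc - ↑z0) = 0 := by
      rw [hBsub₁, hall ⟨_, hdS⟩, hz0 ⟨_, hdS⟩, sub_self]
    have hd0 : uc + Km uc - ↑z0 = 0 := hcoer0 _ hBdd
    have hz'eq : uc + Km uc = (↑z0 : V) := sub_eq_zero.mp hd0
    have : π (uc + Km uc) = uc := by
      rw [map_add, (hmem uc).mp hucmem, hKm₀ uc hucmem, add_zero]
    rw [← this, hz'eq]
  refine ⟨⟨uc₀, ⟨huc₀mem, hsolve⟩, huniq⟩, ?_⟩
  -- the error estimate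
  rintro uc ⟨hucmem, heq⟩
  set e : V := u - ((uc + Km uc) + gm) with he
  set e0 : V := (K (π u) - Km (π u)) + (gF - gm) with he0
  have hgal : ∀ v ∈ Set.range π, B e (v + Km v) = 0 := by
    intro v hv
    rw [he, hBsub₁, hadd₁, hu, heq v hv]
    ring
  have hd : e - e0 = (π u - uc) + Km (π u - uc) := by
    rw [map_sub, he, he0]
    nth_rewrite 1 [hdecomp]
    abel
  have huHuc : (π u - uc) ∈ Set.range π := by
    rw [hmem, map_sub, hπ, (hmem uc).mp hucmem]
  have hBed : B e (e - e0) = 0 := by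
    rw [hd]
    exact hgal _ huHuc
  have hBee : B e e = B e e0 := by
    have h2 : (0 : ℂ) = B e e - B e e0 := by rw [← hBed, hBsub₂]
    exact sub_eq_zero.mp h2.symm
  have he0norm : ‖e0‖ ≤ ε * ‖π u‖ + δ := by
    rw [he0]
    calc ‖K (π u) - Km (π u) + (gF - gm)‖
        ≤ ‖K (π u) - Km (π u)‖ + ‖gF - gm‖ := norm_add_le _ _
      _ ≤ ε * ‖π u‖ + δ :=
          add_le_add (happrox _ hπu_mem) (by rw [norm_sub_rev]; exact hgm)
  have hR0 : 0 ≤ ε * ‖π u‖ + δ := add_nonneg (mul_nonneg hε (norm_nonneg _)) hδ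
  have hdivpos : 0 < C_B / α := div_pos hC_B hα
  have h1 : α * ‖e‖ ^ 2 ≤ ‖B e e0‖ := hBee ▸ hcoer e
  have h2 : ‖B e e0‖ ≤ C_B * ‖e‖ * ‖e0‖ := hbound e e0
  rcases eq_or_lt_of_le (norm_nonneg e) with h0 | hpos
  · rw [← h0]
    exact mul_nonneg hdivpos.le hR0
  · have h3 : α * ‖e‖ ≤ C_B * ‖e0‖ := by nlinarith
    have h4 : ‖e‖ ≤ C_B / α * ‖e0‖ := by
      rw [div_mul_eq_mul_div, le_div_iff₀ hα]
      nlinarith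
    calc ‖e‖ ≤ C_B / α * ‖e0‖ := h4
      _ ≤ C_B / α * (ε * ‖π u‖ + δ) := mul_le_mul_of_nonneg_left he0norm hdivpos.le
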